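/- Unconstrained degree identity: let R be a commutative ring, N ≥ 1, n_1,…,n_N ≥ 1 with ν = (n_1,…,n_N), and let z_1,…,z_N be vectors in R^N with z_i = (z_{i,1},…,z_{i,N}). Then A_ν(z_1,…,z_1, z_2,…,z_2, …, z_N,…,z_N), where each z_i is repeated n_i times (so the number of arguments is n_1+⋯+n_N = |ν|), equals Σ ∏_{i=1}^N multinomial(α_{i,1},…,α_{i,N}) ∏_{j=1}^N z_{i,j}^{α_{i,j}}, the sum over all N-tuples (α_1,…,α_N) of vectors in ℕ^N with |α_i| = n_i for each i and α_1+⋯+α_N = ν; equivalently, it equals Σ over the same index set of ∏_{i=1}^N S_{α_i}(z_i). -/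

import Mathlib

/-- `Afun δ z`: for `δ : Fin N → ℕ` with `|δ| = card ι`, the sum over all maps
`σ : ι → Fin N` whose fiber over `j` has cardinality `δ j` of `∏ i, z i (σ i)`.
This is the function `A_δ(z_1, …, z_k)` of the paper. -/
def Afun {R : Type*} [CommSemiring R] {ι : Type*} [Fintype ι] [DecidableEq ι]
    {N : ℕ} (δ : Fin N → ℕ) (z : ι → Fin N → R) : R :=
  ∑ σ ∈ Finset.univ.filter
      (fun σ : ι → Fin N => ∀ j, (Finset.univ.filter fun i => σ i = j).card = δ j),
    ∏ i, z i (σ i)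

/-- `Sfun δ z`: the sum over all `N × ι` matrices `B` of naturals whose `i`-th row sums
to `δ i` of `∏ j, multinomial(B_{1j},…,B_{Nj}) * ∏ i, (z j i) ^ (B i j)`.
This is the function `S_δ(z_1, …, z_s)` of the paper. -/
def Sfun {R : Type*} [CommSemiring R] {ι : Type*} [Fintype ι] [DecidableEq ι]
    {N : ℕ} (δ : Fin N → ℕ) (z : ι → Fin N → R) : R :=
  ∑ B ∈ Finset.univ.filter
      (fun B : ∀ i : Fin N, ι → Fin (δ i + 1) => ∀ i, (∑ j, ((B i j : ℕ))) = δ i),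
    ∏ j : ι, ((Nat.multinomial Finset.univ fun i : Fin N => (B i j : ℕ)) : R)
      * ∏ i : Fin N, z j i ^ ((B i j : ℕ))

open Finset MvPolynomial

lemma coeff_helper {R : Type*} [CommRing R] {N : ℕ} (nn : Fin N → ℕ) (c : R) (g : Fin N → ℕ) :
    MvPolynomial.coeff (Finsupp.equivFunOnFinite.symm nn)
      (MvPolynomial.C c * ∏ j : Fin N, (MvPolynomial.X j : MvPolynomial (Fin N) R) ^ g j) =
      if g = nn then c else 0 := by
  have h : (∏ j : Fin N, (MvPolynomial.X j : MvPolynomial (Fin N) R) ^ g j) =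
      MvPolynomial.monomial (Finsupp.equivFunOnFinite.symm g) 1 := by
    rw [← MvPolynomial.prod_X_pow_eq_monomial]
    refine (Finset.prod_subset (Finset.subset_univ _) ?_).symm
    intro x _ hx
    have : (Finsupp.equivFunOnFinite.symm g) x = 0 := Finsupp.notMem_support_iff.1 hx
    simp only [Finsupp.coe_equivFunOnFinite_symm] at this
    simp [this]
  rw [h, MvPolynomial.C_mul_monomial, mul_one, MvPolynomial.coeff_monomial]
  simp [EmbeddingLike.apply_eq_iff_eq]


section main
variable {R : Type*} [CommRing R] {N : ℕ} (nn : Fin N → ℕ) (z : Fin N → Fin N → R)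

noncomputable def Pbig : MvPolynomial (Fin N) R :=
  ∏ i : Fin N, (∑ j : Fin N, MvPolynomial.C (z i j) * MvPolynomial.X j) ^ nn i

lemma lemA :
    MvPolynomial.coeff (Finsupp.equivFunOnFinite.symm nn) (Pbig nn z) =
      ∑ σ ∈ Finset.univ.filter
        (fun σ : (Σ i : Fin N, Fin (nn i)) → Fin N =>
          ∀ j, (Finset.univ.filter fun p => σ p = j).card = nn j),
        ∏ p : Σ i : Fin N, Fin (nn i), z p.1 (σ p) := by
  have e1 : Pbig nn z = ∏ p : Σ i : Fin N, Fin (nn i),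
      (∑ j : Fin N, MvPolynomial.C (z p.1 j) * MvPolynomial.X j) := by
    rw [Pbig, ← Finset.univ_sigma_univ, Finset.prod_sigma]
    exact Finset.prod_congr rfl fun i _ => by
      rw [show (∏ s : Fin (nn i), ∑ j : Fin N, MvPolynomial.C (z (⟨i, s⟩ : Σ i, Fin (nn i)).fst j)
          * MvPolynomial.X j) = ∏ _s : Fin (nn i), ∑ j : Fin N, MvPolynomial.C (z i j)
          * MvPolynomial.X j from rfl, Finset.prod_const, Finset.card_univ, Fintype.card_fin]
  rw [e1, Finset.prod_univ_sum, ← Fintype.piFinset_univ, MvPolynomial.coeff_sum]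
  have e2 : ∀ σ : (Σ i : Fin N, Fin (nn i)) → Fin N,
      (∏ p : Σ i : Fin N, Fin (nn i), (MvPolynomial.C (z p.1 (σ p)) * MvPolynomial.X (σ p)))
        = MvPolynomial.C (∏ p : Σ i : Fin N, Fin (nn i), z p.1 (σ p)) *
            ∏ j : Fin N, MvPolynomial.X j ^ (Finset.univ.filter fun p => σ p = j).card := by
    intro σ
    rw [Finset.prod_mul_distrib, map_prod]
    congr 1
    rw [← Finset.prod_fiberwise Finset.univ σ
      (fun p => (MvPolynomial.X (σ p) : MvPolynomial (Fin N) R))]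
    refine Finset.prod_congr rfl fun j _ => ?_
    rw [Finset.prod_congr rfl (fun p hp => by rw [(Finset.mem_filter.1 hp).2]), Finset.prod_const]
  rw [Finset.sum_congr rfl fun σ _ => by rw [e2 σ, coeff_helper], Finset.sum_filter]
  refine Finset.sum_congr rfl fun σ _ => ?_
  have : ((fun j => (Finset.univ.filter fun p => σ p = j).card) = nn) ↔
      ∀ j, (Finset.univ.filter fun p => σ p = j).card = nn j := _root_.funext_iff
  split_ifs with h1 h2 <;> first | rfl | (exfalso; tauto)

end main

section main2
variable {R : Type*} [CommRing R] {N : ℕ} (nn : Fin N → ℕ) (z : Fin N → Fin N → R)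

lemma lemB :
    MvPolynomial.coeff (Finsupp.equivFunOnFinite.symm nn) (Pbig nn z) =
      ∑ α ∈ Finset.univ.filter
          (fun α : Fin N → ∀ j : Fin N, Fin (nn j + 1) =>
            (∀ i : Fin N, (∑ j, ((α i j : ℕ))) = nn i) ∧
            (∀ j : Fin N, (∑ i, ((α i j : ℕ))) = nn j)),
        ∏ i : Fin N,
          ((Nat.multinomial Finset.univ fun j : Fin N => (α i j : ℕ)) : R)
            * ∏ j : Fin N, z i j ^ ((α i j : ℕ)) := by
  classical
  have e1 : Pbig nn z = ∑ K ∈ Fintype.piFinset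
      (fun i : Fin N => Finset.piAntidiag (Finset.univ : Finset (Fin N)) (nn i)),
      ∏ i : Fin N, ((Nat.multinomial Finset.univ (K i) : MvPolynomial (Fin N) R) *
        ∏ j : Fin N, (MvPolynomial.C (z i j) * MvPolynomial.X j) ^ K i j) := by
    rw [Pbig, Finset.prod_congr rfl fun i _ =>
      Finset.sum_pow_eq_sum_piAntidiag Finset.univ (fun j => MvPolynomial.C (z i j) * MvPolynomial.X j) (nn i),
      Finset.prod_univ_sum]
  have e2 : ∀ K : Fin N → Fin N → ℕ,
      (∏ i : Fin N, ((Nat.multinomial Finset.univ (K i) : MvPolynomial (Fin N) R) *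
        ∏ j : Fin N, (MvPolynomial.C (z i j) * MvPolynomial.X j) ^ K i j))
      = MvPolynomial.C (∏ i : Fin N, ((Nat.multinomial Finset.univ (K i) : R) *
          ∏ j : Fin N, z i j ^ K i j)) *
        ∏ j : Fin N, MvPolynomial.X j ^ (∑ i : Fin N, K i j) := by
    intro K
    have hfac : ∀ i : Fin N, ((Nat.multinomial Finset.univ (K i) : MvPolynomial (Fin N) R) *
        ∏ j : Fin N, (MvPolynomial.C (z i j) * MvPolynomial.X j) ^ K i j)
        = MvPolynomial.C ((Nat.multinomial Finset.univ (K i) : R) * ∏ j : Fin N, z i j ^ K i j) *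
          ∏ j : Fin N, MvPolynomial.X j ^ K i j := by
      intro i
      rw [map_mul, map_prod]
      simp only [mul_pow, Finset.prod_mul_distrib, ← map_pow, MvPolynomial.C_eq_coe_nat]
      ring
    rw [Finset.prod_congr rfl fun i _ => hfac i, Finset.prod_mul_distrib, ← map_prod,
      Finset.prod_comm]
    congr 1
    exact Finset.prod_congr rfl fun j _ => Finset.prod_pow_eq_pow_sum _ _ _
  rw [e1, MvPolynomial.coeff_sum,
    Finset.sum_congr rfl fun K _ => by rw [e2 K, coeff_helper], ← Finset.sum_filter]
  refine Finset.sum_bij' (i := fun K hK => fun i j => (⟨K i j, ?_⟩ : Fin (nn j + 1)))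
    (j := fun α hα => fun i j => (α i j : ℕ)) ?_ ?_ ?_ ?_ ?_
  · -- bound : K i j < nn j + 1
    rw [Finset.mem_filter] at hK
    have hcol : ∑ i' : Fin N, K i' j = nn j := congrFun hK.2 j
    have : K i j ≤ ∑ i' : Fin N, K i' j :=
      Finset.single_le_sum (f := fun i' => K i' j) (fun _ _ => Nat.zero_le _) (Finset.mem_univ i)
    omega
  · -- i maps into target
    intro K hK
    rw [Finset.mem_filter] at hK ⊢
    obtain ⟨hK1, hK2⟩ := hK
    rw [Fintype.mem_piFinset] at hK1
    refine ⟨Finset.mem_univ _, fun i => ?_, fun j => congrFun hK2 j⟩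
    exact (Finset.mem_piAntidiag.1 (hK1 i)).1
  · -- j maps into source
    intro α hα
    rw [Finset.mem_filter] at hα ⊢
    obtain ⟨-, hα1, hα2⟩ := hα
    refine ⟨?_, funext fun j => hα2 j⟩
    rw [Fintype.mem_piFinset]
    intro i
    rw [Finset.mem_piAntidiag]
    exact ⟨hα1 i, fun j _ => Finset.mem_univ j⟩
  · intro K hK
    rfl
  · intro α hα
    rfl
  · intro K hK
    rfl

end main2

lemma Sfun_fin_one {R : Type*} [CommRing R] {N : ℕ} (δ : Fin N → ℕ) (v : Fin N → R) :
    Sfun δ (fun _ : Fin 1 => v) =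
      ((Nat.multinomial Finset.univ δ : R) * ∏ j : Fin N, v j ^ δ j) := by
  rw [Sfun]
  have hset : (Finset.univ.filter
      (fun B : ∀ i : Fin N, Fin 1 → Fin (δ i + 1) => ∀ i, (∑ j, ((B i j : ℕ))) = δ i))
      = {fun i _ => (⟨δ i, Nat.lt_succ_self _⟩ : Fin (δ i + 1))} := by
    ext B
    simp only [Finset.mem_filter, Finset.mem_univ, true_and, Finset.mem_singleton,
      Fin.sum_univ_one]
    constructor
    · intro h
      funext i j
      have hj : j = 0 := Subsingleton.elim _ _
      subst hj
      exact Fin.ext (h i)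
    · intro h
      subst h
      intro i
      rfl
  rw [hset, Finset.sum_singleton, Fin.prod_univ_one]


/-- unconstrained degree identity: for a commutative ring `R`,
block sizes `ν = (nn 1, …, nn N)` with `nn i ≥ 1`, and vectors `z_1, …, z_N ∈ R^N`,
the value `A_ν(z_1, …, z_1, …, z_N, …, z_N)` (each `z_i` repeated `nn i` times) equals
`Σ ∏_i multinomial(α_i) ∏_j z_{i,j}^{α_{i,j}}`, summed over all tuples `(α_1, …, α_N)`
in `ℕ^N` with `|α_i| = nn i` and `α_1 + ⋯ + α_N = ν`; equivalently, it equals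
`Σ ∏_i S_{α_i}(z_i)` over the same index set. -/
theorem stmt18 (R : Type*) [CommRing R] (N : ℕ) (hN : 0 < N) (nn : Fin N → ℕ)
    (hnn : ∀ i, 1 ≤ nn i) (z : Fin N → Fin N → R) :
    (Afun nn (fun p : Σ i : Fin N, Fin (nn i) => z p.1) =
      ∑ α ∈ Finset.univ.filter
          (fun α : Fin N → ∀ j : Fin N, Fin (nn j + 1) =>
            (∀ i : Fin N, (∑ j, ((α i j : ℕ))) = nn i) ∧
            (∀ j : Fin N, (∑ i, ((α i j : ℕ))) = nn j)),
        ∏ i : Fin N,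
          ((Nat.multinomial Finset.univ fun j : Fin N => (α i j : ℕ)) : R)
            * ∏ j : Fin N, z i j ^ ((α i j : ℕ))) ∧
    (Afun nn (fun p : Σ i : Fin N, Fin (nn i) => z p.1) =
      ∑ α ∈ Finset.univ.filter
          (fun α : Fin N → ∀ j : Fin N, Fin (nn j + 1) =>
            (∀ i : Fin N, (∑ j, ((α i j : ℕ))) = nn i) ∧
            (∀ j : Fin N, (∑ i, ((α i j : ℕ))) = nn j)),
        ∏ i : Fin N,
          Sfun (fun j => ((α i j : ℕ))) (fun _ : Fin 1 => z i)) := by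
  have key : Afun nn (fun p : Σ i : Fin N, Fin (nn i) => z p.1) =
      ∑ α ∈ Finset.univ.filter
          (fun α : Fin N → ∀ j : Fin N, Fin (nn j + 1) =>
            (∀ i : Fin N, (∑ j, ((α i j : ℕ))) = nn i) ∧
            (∀ j : Fin N, (∑ i, ((α i j : ℕ))) = nn j)),
        ∏ i : Fin N,
          ((Nat.multinomial Finset.univ fun j : Fin N => (α i j : ℕ)) : R)
            * ∏ j : Fin N, z i j ^ ((α i j : ℕ)) := by
    exact (lemA nn z).symm.trans (lemB nn z)
  refine ⟨key, key.trans (Finset.sum_congr rfl fun α _ => Finset.prod_congr rfl fun i _ => ?_)⟩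
  rw [Sfun_fin_one]
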